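/- Let F : P₂(ℝ^d) → ℝ be convex, i.e. F((1−t)μ + tρ) ≤ (1−t)F(μ) + tF(ρ) for all μ, ρ ∈ P₂(ℝ^d) and t ∈ [0,1]. Suppose F admits a derivative δ at some μ* ∈ P₂(ℝ^d), that δ : ℝ^d → ℝ is continuously differentiable, that ∇δ(x) = 0 for μ*-almost every x, and that supp(μ*) = ℝ^d. Then μ* minimizes F over P₂(ℝ^d): F(μ*) ≤ F(μ) for every μ ∈ P₂(ℝ^d). -/

import Mathlib

open MeasureTheory ENNReal Filter
open scoped Topology

/-- `μ ∈ P₂(ℝ^d)`: a Borel probability measure with finite second moment. -/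
def MemP2 {d : ℕ} (μ : Measure (EuclideanSpace ℝ (Fin d))) : Prop :=
  IsProbabilityMeasure μ ∧ Integrable (fun x => ‖x‖ ^ 2) μ

/-- A critical point (vanishing gradient of the derivative, `μ*`-a.e.) of a convex
functional with full support is a global minimizer over `P₂(ℝ^d)`. -/
theorem critical_point_full_support_is_minimizer
    {d : ℕ} (F : Measure (EuclideanSpace ℝ (Fin d)) → ℝ)
    (hconv : ∀ μ ρ : Measure (EuclideanSpace ℝ (Fin d)), MemP2 μ → MemP2 ρ →
      ∀ t : ℝ, 0 ≤ t → t ≤ 1 →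
        F (ENNReal.ofReal (1 - t) • μ + ENNReal.ofReal t • ρ)
          ≤ (1 - t) * F μ + t * F ρ)
    (μstar : Measure (EuclideanSpace ℝ (Fin d))) (hμstar : MemP2 μstar)
    (δ : EuclideanSpace ℝ (Fin d) → ℝ)
    (hδcont : Continuous δ)
    (hδint : Integrable δ μstar) (hδint' : ∀ ρ, MemP2 ρ → Integrable δ ρ)
    (hderiv : ∀ ρ : Measure (EuclideanSpace ℝ (Fin d)), MemP2 ρ →
      Tendsto
        (fun t : ℝ =>
          (F (ENNReal.ofReal (1 - t) • μstar + ENNReal.ofReal t • ρ) - F μstar) / t)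
        (𝓝[>] (0 : ℝ)) (𝓝 ((∫ x, δ x ∂ρ) - ∫ x, δ x ∂μstar)))
    (hδC1 : ContDiff ℝ 1 δ)
    (hcrit : ∀ᵐ x ∂μstar, gradient δ x = 0)
    (hsupp : ∀ U : Set (EuclideanSpace ℝ (Fin d)), IsOpen U → U.Nonempty → μstar U ≠ 0) :
    ∀ μ : Measure (EuclideanSpace ℝ (Fin d)), MemP2 μ → F μstar ≤ F μ := by
  intro μ hμ
  -- gradient δ is continuous
  have hgradcont : Continuous (gradient δ) := by
    have hfd : Continuous (fderiv ℝ δ) := hδC1.continuous_fderiv one_ne_zero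
    have : Continuous fun x => (InnerProductSpace.toDual ℝ
        (EuclideanSpace ℝ (Fin d))).symm (fderiv ℝ δ x) :=
      (InnerProductSpace.toDual ℝ _).symm.continuous.comp hfd
    exact this
  -- gradient vanishes everywhere
  have hgrad0 : ∀ x, gradient δ x = 0 := by
    by_contra h
    push_neg at h
    obtain ⟨x, hx⟩ := h
    set U := {y | gradient δ y ≠ 0} with hU
    have hUopen : IsOpen U := isOpen_compl_iff.mpr (isClosed_eq hgradcont continuous_const)
    have := hsupp U hUopen ⟨x, hx⟩
    have hnull : μstar U = 0 := by
      have := hcrit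
      rw [ae_iff] at this
      exact this
    exact (hsupp U hUopen ⟨x, hx⟩) hnull
  -- δ is constant
  have hdiff : Differentiable ℝ δ := hδC1.differentiable one_ne_zero
  have hconst : ∀ x y, δ x = δ y := by
    intro x y
    apply is_const_of_fderiv_eq_zero hdiff _ x y
    intro z
    have : gradient δ z = 0 := hgrad0 z
    have h2 : (InnerProductSpace.toDual ℝ (EuclideanSpace ℝ (Fin d))).symm
        (fderiv ℝ δ z) = 0 := this
    have := congrArg (InnerProductSpace.toDual ℝ (EuclideanSpace ℝ (Fin d))) h2
    simpa using this
  -- integrals coincide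
  have hint_eq : (∫ x, δ x ∂μ) = ∫ x, δ x ∂μstar := by
    have h1 : (∫ x, δ x ∂μ) = δ 0 := by
      have : (fun x => δ x) = fun _ => δ 0 := funext fun x => hconst x 0
      rw [this]
      haveI := hμ.1
      simp
    have h2 : (∫ x, δ x ∂μstar) = δ 0 := by
      have : (fun x => δ x) = fun _ => δ 0 := funext fun x => hconst x 0
      rw [this]
      haveI := hμstar.1
      simp
    rw [h1, h2]
  have hlim := hderiv μ hμ
  rw [hint_eq, sub_self] at hlim
  -- eventual bound
  have hev : ∀ᶠ t in 𝓝[>] (0:ℝ),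
      (F (ENNReal.ofReal (1 - t) • μstar + ENNReal.ofReal t • μ) - F μstar) / t
        ≤ F μ - F μstar := by
    filter_upwards [Ioo_mem_nhdsGT_of_mem (by simp : (0:ℝ) ∈ Set.Ico 0 1)] with t ht
    obtain ⟨ht0, ht1⟩ := ht
    have h := hconv μstar μ hμstar hμ t ht0.le ht1.le
    rw [div_le_iff₀ ht0]
    nlinarith [h]
  have : (0:ℝ) ≤ F μ - F μstar := le_of_tendsto hlim hev
  linarith
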